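/- Let N ≥ 1, I = {0,1,…,N}, fix k with 0 ≤ k < N, and let α ≥ 0, β ≥ 0. Define γ(x) = α if x ≤ k and γ(x) = β if x > k, and the generalized ultrametric matrix H(x,y) = 1{x ≤ y}·(1 + γ(x)·1{(x ≤ k) ↔ (y ≤ k)}). Let P be a stochastic matrix on I and let P̂ be the unique matrix satisfying H·P̂ᵀ = P·H (H is invertible, being triangular with positive diagonal). Assume: (1) there exists δ ∈ (0,1) such that Σ_{z≤k} P(x,z) = δ for every x ∈ I; (2) for every y ≤ k, the map x ↦ Σ_{z≤y} P(x,z) is nonincreasing in x on all of I; (3) for every y > k, the map x ↦ Σ_{k<z≤y} P(x,z) is nonincreasing in x on all of I. Then P̂ is entrywise nonnegative. If moreover β > 0, then P̂ is substochastic (all row sums ≤ 1) if and only if δ = (1+β)/(1+α+β); and in that case the row sums of P̂ at the states k and N equal 1. -/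

import Mathlib

open Matrix Finset


def Hm (N k : ℕ) (α β : ℝ) : Matrix (Fin (N+1)) (Fin (N+1)) ℝ :=
  Matrix.of fun x y : Fin (N+1) =>
    if x ≤ y then
      1 + (if ((x : ℕ) ≤ k ↔ (y : ℕ) ≤ k) then (if (x : ℕ) ≤ k then α else β) else 0)
    else 0

lemma A_step (N k : ℕ) (α β : ℝ) (Q : Fin (N+1) → ℝ) (x : Fin (N+1))
    (hx : (x : ℕ) < N) (hxk : (x : ℕ) ≠ k) :
    ∑ z, Hm N k α β x z * Q z
      = (1 + (if (x : ℕ) ≤ k then α else β)) * Q x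
        + ∑ z, Hm N k α β (⟨(x : ℕ) + 1, by omega⟩ : Fin (N+1)) z * Q z := by
  set x' : Fin (N+1) := ⟨(x : ℕ) + 1, by omega⟩ with hx'
  have key : ∀ z : Fin (N+1), Hm N k α β x z * Q z
      = (if z = x then (1 + (if (x : ℕ) ≤ k then α else β)) * Q x else 0)
        + Hm N k α β x' z * Q z := by
    intro z
    by_cases hz : z = x
    · subst hz
      have h1 : ¬ (x' ≤ z) := by simp [hx', Fin.le_def]
      simp [Hm, h1]
    · by_cases hxz : x ≤ z
      · have hz2 : x' ≤ z := by
          rw [Fin.le_def] at hxz ⊢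
          have : (x : ℕ) ≠ (z : ℕ) := fun h => hz (Fin.ext h.symm)
          simp only [hx']; omega
        have e1 : ((x : ℕ) ≤ k) ↔ ((x' : ℕ) ≤ k) := by
          simp only [hx']; omega
        simp only [Hm, Matrix.of_apply, if_pos hxz, if_pos hz2, if_neg hz, e1]
        ring
      · have h2 : ¬ (x' ≤ z) := by
          rw [Fin.le_def] at hxz ⊢; simp only [hx']; omega
        simp [Hm, hxz, h2, hz]
  rw [Finset.sum_congr rfl (fun z _ => key z), Finset.sum_add_distrib,
    Finset.sum_ite_eq' Finset.univ x]
  simp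
lemma A_k (N k : ℕ) (α β : ℝ) (Q : Fin (N+1) → ℝ) (hkN : k < N) :
    ∑ z, Hm N k α β (⟨k, Nat.lt_succ_of_lt hkN⟩ : Fin (N+1)) z * Q z
      = (1 + α) * Q (⟨k, Nat.lt_succ_of_lt hkN⟩ : Fin (N+1))
        + ∑ z ∈ Finset.univ.filter (fun z : Fin (N+1) => k < (z : ℕ)), Q z := by
  set kf : Fin (N+1) := ⟨k, Nat.lt_succ_of_lt hkN⟩ with hkf
  have key : ∀ z : Fin (N+1), Hm N k α β kf z * Q z
      = (if z = kf then (1 + α) * Q kf else 0) + (if k < (z : ℕ) then Q z else 0) := by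
    intro z
    by_cases hz : z = kf
    · have hzv : (z : ℕ) = k := by rw [hz]
      have h2 : ¬ (k < (z : ℕ)) := by omega
      have h3 : kf ≤ z := by rw [Fin.le_def]; simp [hkf]; omega
      simp [Hm, hz, hzv, h2, h3, hkf]
    · by_cases hzk : k < (z : ℕ)
      · have h1 : kf ≤ z := by rw [Fin.le_def]; simp [hkf]; omega
        simp only [Hm, Matrix.of_apply, if_pos h1, if_neg hz]
        simp [hkf, hzk, Nat.not_le.mpr hzk]
      · have h1 : ¬ (kf ≤ z) := by
          rw [Fin.le_def]
          have : (z : ℕ) ≠ k := fun h => hz (Fin.ext (by simp [hkf, h]))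
          simp [hkf]; omega
        simp [Hm, h1, hz, hzk]
  rw [Finset.sum_congr rfl (fun z _ => key z), Finset.sum_add_distrib,
    Finset.sum_ite_eq' Finset.univ kf, Finset.sum_filter]
  simp

lemma A_kp1 (N k : ℕ) (α β : ℝ) (Q : Fin (N+1) → ℝ) (hkN : k < N) :
    ∑ z, Hm N k α β (⟨k+1, by omega⟩ : Fin (N+1)) z * Q z
      = (1 + β) * ∑ z ∈ Finset.univ.filter (fun z : Fin (N+1) => k < (z : ℕ)), Q z := by
  have key : ∀ z : Fin (N+1), Hm N k α β (⟨k+1, by omega⟩ : Fin (N+1)) z * Q z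
      = (if k < (z : ℕ) then (1 + β) * Q z else 0) := by
    intro z
    by_cases hzk : k < (z : ℕ)
    · have h1 : (⟨k+1, by omega⟩ : Fin (N+1)) ≤ z := by rw [Fin.le_def]; simp; omega
      have h2 : ¬ ((k+1 : ℕ) ≤ k) := by omega
      simp [Hm, h1, h2, hzk, Nat.not_le.mpr hzk]
    · have h1 : ¬ ((⟨k+1, by omega⟩ : Fin (N+1)) ≤ z) := by
        rw [Fin.le_def]; simp; omega
      simp [Hm, h1, hzk]
  rw [Finset.sum_congr rfl (fun z _ => key z), ← Finset.sum_filter, Finset.mul_sum]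

lemma A_0 (N k : ℕ) (α β : ℝ) (Q : Fin (N+1) → ℝ) :
    ∑ z, Hm N k α β (0 : Fin (N+1)) z * Q z
      = (1 + α) * ∑ z ∈ Finset.univ.filter (fun z : Fin (N+1) => (z : ℕ) ≤ k), Q z
        + ∑ z ∈ Finset.univ.filter (fun z : Fin (N+1) => k < (z : ℕ)), Q z := by
  have key : ∀ z : Fin (N+1), Hm N k α β (0 : Fin (N+1)) z * Q z
      = (if (z : ℕ) ≤ k then (1 + α) * Q z else 0) + (if k < (z : ℕ) then Q z else 0) := by
    intro z
    have h0 : (0 : Fin (N+1)) ≤ z := Fin.zero_le z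
    have h0v : ((0 : Fin (N+1)) : ℕ) = 0 := rfl
    by_cases hzk : (z : ℕ) ≤ k
    · simp [Hm, h0, h0v, hzk, Nat.not_lt.mpr hzk]
    · simp [Hm, h0, h0v, hzk, Nat.lt_of_not_le hzk]
  rw [Finset.sum_congr rfl (fun z _ => key z), Finset.sum_add_distrib,
    ← Finset.sum_filter, ← Finset.sum_filter, Finset.mul_sum]

lemma A_last (N k : ℕ) (α β : ℝ) (Q : Fin (N+1) → ℝ) (hkN : k < N) :
    ∑ z, Hm N k α β (Fin.last N) z * Q z = (1 + β) * Q (Fin.last N) := by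
  have key : ∀ z : Fin (N+1), Hm N k α β (Fin.last N) z * Q z
      = (if z = Fin.last N then (1 + β) * Q z else 0) := by
    intro z
    have hNk : ¬ (N ≤ k) := by omega
    by_cases hz : z = Fin.last N
    · have hzv : (z : ℕ) = N := by rw [hz]; rfl
      have h3 : Fin.last N ≤ z := by rw [Fin.le_def]; simp [Fin.last]; omega
      simp [Hm, hz, hzv, h3, hNk, Nat.not_le.mpr (by omega : k < N)]
    · have h1 : ¬ (Fin.last N ≤ z) := by
        rw [Fin.le_def]
        have : (z : ℕ) ≠ N := fun h => hz (Fin.ext (by simp [Fin.last, h]))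
        simp [Fin.last]; omega
      simp [Hm, h1, hz]
  rw [Finset.sum_congr rfl (fun z _ => key z), Finset.sum_ite_eq' Finset.univ (Fin.last N)]
  simp
lemma F_le (N k : ℕ) (α β : ℝ) (P : Matrix (Fin (N+1)) (Fin (N+1)) ℝ)
    (x y : Fin (N+1)) (hy : (y : ℕ) ≤ k) :
    ∑ z, P x z * Hm N k α β z y = (1 + α) * ∑ z ∈ Finset.Iic y, P x z := by
  have key : ∀ z : Fin (N+1), P x z * Hm N k α β z y
      = (if z ≤ y then (1 + α) * P x z else 0) := by
    intro z
    by_cases hz : z ≤ y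
    · have hzk : (z : ℕ) ≤ k := le_trans (Fin.le_def.mp hz) hy
      simp [Hm, hz, hzk, hy]
      ring
    · simp [Hm, hz]
  rw [Finset.sum_congr rfl (fun z _ => key z), ← Finset.sum_filter]
  have : Finset.univ.filter (fun z : Fin (N+1) => z ≤ y) = Finset.Iic y := by
    ext z; simp
  rw [this, Finset.mul_sum]

lemma F_gt (N k : ℕ) (α β : ℝ) (P : Matrix (Fin (N+1)) (Fin (N+1)) ℝ)
    (x y : Fin (N+1)) (hy : k < (y : ℕ)) :
    ∑ z, P x z * Hm N k α β z y
      = (∑ z ∈ Finset.univ.filter (fun z : Fin (N+1) => (z : ℕ) ≤ k), P x z)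
        + (1 + β) * ∑ z ∈ Finset.univ.filter
            (fun z : Fin (N+1) => k < (z : ℕ) ∧ z ≤ y), P x z := by
  have key : ∀ z : Fin (N+1), P x z * Hm N k α β z y
      = (if (z : ℕ) ≤ k then P x z else 0)
        + (if (k < (z : ℕ) ∧ z ≤ y) then (1 + β) * P x z else 0) := by
    intro z
    by_cases hzk : (z : ℕ) ≤ k
    · have hz : z ≤ y := by rw [Fin.le_def]; omega
      simp [Hm, hz, hzk, Nat.not_le.mpr hy, Nat.not_lt.mpr hzk]
    · by_cases hz : z ≤ y
      · simp [Hm, hz, hzk, Nat.not_le.mpr hy, Nat.lt_of_not_le hzk]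
        ring
      · simp [Hm, hz, hzk, Nat.lt_of_not_le hzk]
  rw [Finset.sum_congr rfl (fun z _ => key z), Finset.sum_add_distrib,
    ← Finset.sum_filter, ← Finset.sum_filter, Finset.mul_sum]

set_option maxHeartbeats 1600000 in
/-- Proposition prop7: for the generalized ultrametric kernel `H` with parameters
`α, β ≥ 0` and cut point `k < N`, conditions (1)–(3) imply that the `H`-dual `P̂` of a
stochastic `P` is entrywise nonnegative; and if `β > 0`, `P̂` is substochastic iff
`δ = (1+β)/(1+α+β)`, in which case the row sums at `k` and `N` equal `1`. -/
theorem stmt16 (N k : ℕ) (hN : 1 ≤ N) (hk : k < N) (α β : ℝ)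
    (hα : 0 ≤ α) (hβ : 0 ≤ β) (δ : ℝ) (hδ0 : 0 < δ) (hδ1 : δ < 1)
    (P : Matrix (Fin (N+1)) (Fin (N+1)) ℝ) (Phat : Matrix (Fin (N+1)) (Fin (N+1)) ℝ)
    (hP0 : ∀ x y, 0 ≤ P x y) (hP1 : ∀ x, ∑ y, P x y = 1)
    (hdual :
      (Matrix.of fun x y : Fin (N+1) =>
        if x ≤ y then
          1 + (if ((x : ℕ) ≤ k ↔ (y : ℕ) ≤ k) then
            (if (x : ℕ) ≤ k then α else β) else 0)
        else 0) * Phatᵀ =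
      P * (Matrix.of fun x y : Fin (N+1) =>
        if x ≤ y then
          1 + (if ((x : ℕ) ≤ k ↔ (y : ℕ) ≤ k) then
            (if (x : ℕ) ≤ k then α else β) else 0)
        else 0))
    (hcut : ∀ x : Fin (N+1),
      ∑ z ∈ Finset.univ.filter (fun z : Fin (N+1) => (z : ℕ) ≤ k), P x z = δ)
    (hmono1 : ∀ y : Fin (N+1), (y : ℕ) ≤ k → ∀ x x' : Fin (N+1), x ≤ x' →
      ∑ z ∈ Finset.Iic y, P x' z ≤ ∑ z ∈ Finset.Iic y, P x z)
    (hmono2 : ∀ y : Fin (N+1), k < (y : ℕ) → ∀ x x' : Fin (N+1), x ≤ x' →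
      ∑ z ∈ Finset.univ.filter (fun z : Fin (N+1) => k < (z : ℕ) ∧ z ≤ y), P x' z ≤
      ∑ z ∈ Finset.univ.filter (fun z : Fin (N+1) => k < (z : ℕ) ∧ z ≤ y), P x z) :
    (∀ i j, 0 ≤ Phat i j) ∧
    (0 < β →
      ((∀ x, ∑ y, Phat x y ≤ 1) ↔ δ = (1 + β) / (1 + α + β)) ∧
      ((∀ x, ∑ y, Phat x y ≤ 1) →
        (∑ y, Phat (⟨k, by omega⟩ : Fin (N+1)) y = 1 ∧
         ∑ y, Phat (Fin.last N) y = 1))) := by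
  have hd : Hm N k α β * Phatᵀ = P * Hm N k α β := hdual
  have hα1 : (0:ℝ) < 1 + α := by linarith
  have hβ1 : (0:ℝ) < 1 + β := by linarith
  set kf : Fin (N+1) := ⟨k, by omega⟩ with hkf
  set kp : Fin (N+1) := ⟨k+1, by omega⟩ with hkp
  have hEnt : ∀ x y : Fin (N+1),
      ∑ z, Hm N k α β x z * Phat y z = ∑ z, P x z * Hm N k α β z y := by
    intro x y
    have h := congrFun (congrFun hd x) y
    simpa [Matrix.mul_apply, Matrix.transpose_apply] using h
  -- nonneg of H and F
  have hHnn : ∀ x y : Fin (N+1), 0 ≤ Hm N k α β x y := by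
    intro x y
    unfold Hm
    simp only [Matrix.of_apply]
    split_ifs <;> linarith
  have hFnn : ∀ x i : Fin (N+1), 0 ≤ ∑ z, P x z * Hm N k α β z i :=
    fun x i => Finset.sum_nonneg fun z _ => mul_nonneg (hP0 x z) (hHnn z i)
  -- basic P facts
  have hfiltercompl : (Finset.univ.filter (fun z : Fin (N+1) => ¬ (z:ℕ) ≤ k))
      = Finset.univ.filter (fun z : Fin (N+1) => k < (z:ℕ)) := by
    apply Finset.filter_congr; intro z _; simp
  have hTall : ∀ x : Fin (N+1),
      ∑ z ∈ Finset.univ.filter (fun z : Fin (N+1) => k < (z:ℕ)), P x z = 1 - δ := by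
    intro x
    have h1 := Finset.sum_filter_add_sum_filter_not Finset.univ
      (fun z : Fin (N+1) => (z:ℕ) ≤ k) (P x)
    rw [hfiltercompl, hcut x, hP1 x] at h1
    linarith
  have hIicKf : Finset.Iic kf = Finset.univ.filter (fun z : Fin (N+1) => (z:ℕ) ≤ k) := by
    ext z; simp [Fin.le_def, hkf]
  have hSk : ∀ x : Fin (N+1), ∑ z ∈ Finset.Iic kf, P x z = δ := by
    intro x; rw [hIicKf]; exact hcut x
  have hSle : ∀ (x i : Fin (N+1)), (i:ℕ) ≤ k → ∑ z ∈ Finset.Iic i, P x z ≤ δ := by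
    intro x i hi
    rw [← hcut x]
    apply Finset.sum_le_sum_of_subset_of_nonneg
    · intro z hz
      simp only [Finset.mem_Iic] at hz
      simp only [Finset.mem_filter, Finset.mem_univ, true_and]
      exact le_trans (Fin.le_def.mp hz) hi
    · intro z _ _; exact hP0 x z
  have hTlast : ∀ x : Fin (N+1),
      ∑ z ∈ Finset.univ.filter (fun z : Fin (N+1) => k < (z:ℕ) ∧ z ≤ Fin.last N), P x z
        = 1 - δ := by
    intro x
    rw [← hTall x]
    congr 1
    apply Finset.filter_congr; intro z _; simp [Fin.le_last]
  have hTle : ∀ (x i : Fin (N+1)),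
      ∑ z ∈ Finset.univ.filter (fun z : Fin (N+1) => k < (z:ℕ) ∧ z ≤ i), P x z ≤ 1 - δ := by
    intro x i
    rw [← hTall x]
    apply Finset.sum_le_sum_of_subset_of_nonneg
    · intro z hz
      simp only [Finset.mem_filter, Finset.mem_univ, true_and] at hz ⊢
      exact hz.1
    · intro z _ _; exact hP0 x z
  have hSnn : ∀ (x : Fin (N+1)) (s : Finset (Fin (N+1))), 0 ≤ ∑ z ∈ s, P x z :=
    fun x s => Finset.sum_nonneg fun z _ => hP0 x z
  -- entry identities
  have hVeq : ∀ i : Fin (N+1),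
      (1+β) * ∑ z ∈ Finset.univ.filter (fun z : Fin (N+1) => k < (z:ℕ)), Phat i z
        = ∑ z, P kp z * Hm N k α β z i := by
    intro i
    rw [← A_kp1 N k α β (Phat i) hk]
    exact hEnt kp i
  have hUeq : ∀ i : Fin (N+1),
      (1+α) * (∑ z ∈ Finset.univ.filter (fun z : Fin (N+1) => (z:ℕ) ≤ k), Phat i z)
        + (∑ z ∈ Finset.univ.filter (fun z : Fin (N+1) => k < (z:ℕ)), Phat i z)
        = ∑ z, P 0 z * Hm N k α β z i := by
    intro i
    rw [← A_0 N k α β (Phat i)]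
    exact hEnt 0 i
  have hKeq : ∀ i : Fin (N+1),
      (1+α) * Phat i kf
        + (∑ z ∈ Finset.univ.filter (fun z : Fin (N+1) => k < (z:ℕ)), Phat i z)
        = ∑ z, P kf z * Hm N k α β z i := by
    intro i
    rw [← A_k N k α β (Phat i) hk]
    exact hEnt kf i
  have hLeq : ∀ i : Fin (N+1),
      (1+β) * Phat i (Fin.last N) = ∑ z, P (Fin.last N) z * Hm N k α β z i := by
    intro i
    rw [← A_last N k α β (Phat i) hk]
    exact hEnt (Fin.last N) i
  have hStep : ∀ (i j : Fin (N+1)) (h1 : (j:ℕ) < N), (j:ℕ) ≠ k →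
      (1 + (if (j:ℕ) ≤ k then α else β)) * Phat i j
        = (∑ z, P j z * Hm N k α β z i)
          - (∑ z, P (⟨(j:ℕ)+1, by omega⟩ : Fin (N+1)) z * Hm N k α β z i) := by
    intro i j h1 h2
    have h := A_step N k α β (Phat i) j h1 h2
    rw [hEnt j i, hEnt (⟨(j:ℕ)+1, by omega⟩ : Fin (N+1)) i] at h
    linarith
  -- nonnegativity
  have hnn : ∀ i j : Fin (N+1), 0 ≤ Phat i j := by
    intro i j
    by_cases hjN : (j:ℕ) = N
    · have hj : j = Fin.last N := Fin.ext (by simpa [Fin.last] using hjN)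
      rw [hj]
      have h := hLeq i
      have hr : 0 ≤ (1+β) * Phat i (Fin.last N) := h ▸ hFnn (Fin.last N) i
      exact le_of_mul_le_mul_left (by simpa using hr) hβ1
    · by_cases hjk : (j:ℕ) = k
      · have hj : j = kf := Fin.ext (by simp [hkf, hjk])
        rw [hj]
        have e : (1+β) * ((1+α) * Phat i kf)
            = (1+β) * (∑ z, P kf z * Hm N k α β z i)
              - (∑ z, P kp z * Hm N k α β z i) := by
          have h1 := hKeq i
          have h2 := hVeq i
          linear_combination (1+β) * h1 - h2
        have hkfkp : kf ≤ kp := by rw [Fin.le_def]; simp [hkf, hkp]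
        have hr : 0 ≤ (1+β) * ((1+α) * Phat i kf) := by
          by_cases hik : (i:ℕ) ≤ k
          · have f1 := F_le N k α β P kf i hik
            have f2 := F_le N k α β P kp i hik
            have hm := hmono1 i hik kf kp hkfkp
            have h0 := hSnn kp (Finset.Iic i)
            have ha := hSnn kf (Finset.Iic i)
            have e' : (1+β) * ((1+α) * Phat i kf)
                = (1+β) * ((1+α) * ∑ z ∈ Finset.Iic i, P kf z)
                  - (1+α) * ∑ z ∈ Finset.Iic i, P kp z := by
              linear_combination e + (1+β) * f1 - f2
            nlinarith [e', hm, h0, ha, mul_nonneg (mul_nonneg hα hβ) ha,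
              mul_nonneg hβ ha, mul_nonneg hα (sub_nonneg.mpr hm)]
          · have hik' : k < (i:ℕ) := by omega
            have f1 := F_gt N k α β P kf i hik'
            have f2 := F_gt N k α β P kp i hik'
            have hm := hmono2 i hik' kf kp hkfkp
            have h0 := hSnn kp (Finset.univ.filter (fun z : Fin (N+1) => k < (z:ℕ) ∧ z ≤ i))
            have ha := hSnn kf (Finset.univ.filter (fun z : Fin (N+1) => k < (z:ℕ) ∧ z ≤ i))
            have e' : (1+β) * ((1+α) * Phat i kf)
                = (1+β) * (δ + (1+β) *
                    ∑ z ∈ Finset.univ.filter (fun z : Fin (N+1) => k < (z:ℕ) ∧ z ≤ i), P kf z)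
                  - (δ + (1+β) *
                    ∑ z ∈ Finset.univ.filter (fun z : Fin (N+1) => k < (z:ℕ) ∧ z ≤ i), P kp z) := by
              linear_combination e + (1+β) * f1 - f2 + (1+β) * (hcut kf) - (hcut kp)
            nlinarith [e', hm, h0, ha, hδ0.le, mul_nonneg hβ hδ0.le, mul_nonneg hβ ha,
              mul_nonneg (mul_nonneg hβ hβ) ha, mul_nonneg hβ (sub_nonneg.mpr hm)]
        have h3 : 0 ≤ (1+α) * Phat i kf := le_of_mul_le_mul_left (by simpa using hr) hβ1
        exact le_of_mul_le_mul_left (by simpa using h3) hα1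
      · have hjlt : (j:ℕ) < N := by have := j.isLt; omega
        have e := hStep i j hjlt hjk
        have hposγ : 0 < 1 + (if (j:ℕ) ≤ k then α else β) := by split_ifs <;> linarith
        have hjj : j ≤ (⟨(j:ℕ)+1, by omega⟩ : Fin (N+1)) := by rw [Fin.le_def]; simp
        have hr : 0 ≤ (1 + (if (j:ℕ) ≤ k then α else β)) * Phat i j := by
          by_cases hik : (i:ℕ) ≤ k
          · have f1 := F_le N k α β P j i hik
            have f2 := F_le N k α β P (⟨(j:ℕ)+1, by omega⟩ : Fin (N+1)) i hik
            have hm := hmono1 i hik j (⟨(j:ℕ)+1, by omega⟩ : Fin (N+1)) hjj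
            have e' : (1 + (if (j:ℕ) ≤ k then α else β)) * Phat i j
                = (1+α) * ∑ z ∈ Finset.Iic i, P j z
                  - (1+α) * ∑ z ∈ Finset.Iic i, P (⟨(j:ℕ)+1, by omega⟩ : Fin (N+1)) z := by
              linear_combination e + f1 - f2
            nlinarith [e', hm, mul_nonneg hα (sub_nonneg.mpr hm)]
          · have hik' : k < (i:ℕ) := by omega
            have f1 := F_gt N k α β P j i hik'
            have f2 := F_gt N k α β P (⟨(j:ℕ)+1, by omega⟩ : Fin (N+1)) i hik'
            have hm := hmono2 i hik' j (⟨(j:ℕ)+1, by omega⟩ : Fin (N+1)) hjj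
            have e' : (1 + (if (j:ℕ) ≤ k then α else β)) * Phat i j
                = (1+β) * ∑ z ∈ Finset.univ.filter (fun z : Fin (N+1) => k < (z:ℕ) ∧ z ≤ i), P j z
                  - (1+β) * ∑ z ∈ Finset.univ.filter (fun z : Fin (N+1) => k < (z:ℕ) ∧ z ≤ i),
                      P (⟨(j:ℕ)+1, by omega⟩ : Fin (N+1)) z := by
              linear_combination e + f1 - f2 + hcut j - hcut (⟨(j:ℕ)+1, by omega⟩ : Fin (N+1))
            nlinarith [e', hm, mul_nonneg hβ (sub_nonneg.mpr hm)]
        exact le_of_mul_le_mul_left (by simpa using hr) hposγ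
  -- row sum formula
  have hRow : ∀ i : Fin (N+1),
      (1+α) * ((1+β) * (∑ j, Phat i j))
        = (1+β) * (∑ z, P 0 z * Hm N k α β z i) + α * (∑ z, P kp z * Hm N k α β z i) := by
    intro i
    have hsplit := Finset.sum_filter_add_sum_filter_not Finset.univ
      (fun z : Fin (N+1) => (z:ℕ) ≤ k) (Phat i)
    rw [hfiltercompl] at hsplit
    have h1 := hUeq i
    have h2 := hVeq i
    linear_combination (-(1+α)*(1+β)) * hsplit + (1+β) * h1 + α * h2
  have hkk : ((kf : Fin (N+1)) : ℕ) ≤ k := by simp [hkf]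
  have hlk : k < ((Fin.last N : Fin (N+1)) : ℕ) := by simp [Fin.last]; omega
  have hRowKf : (1+α) * ((1+β) * (∑ j, Phat kf j)) = (1+α) * ((1+α+β) * δ) := by
    have h := hRow kf
    have f1 := F_le N k α β P 0 kf hkk
    have f2 := F_le N k α β P kp kf hkk
    linear_combination h + (1+β) * f1 + α * f2 + (1+β)*(1+α) * (hSk 0) + α*(1+α) * (hSk kp)
  have hRowLast : (1+α) * ((1+β) * (∑ j, Phat (Fin.last N) j))
      = (1+α+β) * (δ + (1+β)*(1-δ)) := by
    have h := hRow (Fin.last N)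
    have f1 := F_gt N k α β P 0 (Fin.last N) hlk
    have f2 := F_gt N k α β P kp (Fin.last N) hlk
    linear_combination h + (1+β) * f1 + α * f2 + (1+β) * (hcut 0) + α * (hcut kp)
      + (1+β)*(1+β) * (hTlast 0) + α*(1+β) * (hTlast kp)
  refine ⟨hnn, fun hβpos => ?_⟩
  have hsum_pos : (0:ℝ) < 1 + α + β := by linarith
  have hIff : (∀ x, ∑ y, Phat x y ≤ 1) ↔ δ = (1 + β) / (1 + α + β) := by
    constructor
    · intro hsub
      have t1 : (1+α) * ((1+β) * (∑ j, Phat kf j)) ≤ (1+α) * ((1+β) * 1) :=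
        mul_le_mul_of_nonneg_left (mul_le_mul_of_nonneg_left (hsub kf) hβ1.le) hα1.le
      rw [hRowKf] at t1
      have e1 : (1+α+β) * δ ≤ (1+β) * 1 := le_of_mul_le_mul_left t1 hα1
      have t2 : (1+α) * ((1+β) * (∑ j, Phat (Fin.last N) j)) ≤ (1+α) * ((1+β) * 1) :=
        mul_le_mul_of_nonneg_left (mul_le_mul_of_nonneg_left (hsub (Fin.last N)) hβ1.le) hα1.le
      rw [hRowLast] at t2
      have e2 : 1 + β ≤ (1+α+β) * δ := by nlinarith [t2, hβpos]
      rw [eq_div_iff (ne_of_gt hsum_pos)]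
      linarith
    · intro hδeq
      have hδ' : δ * (1+α+β) = 1+β := by
        rw [hδeq]; field_simp
      intro i
      have h := hRow i
      have key : (1+α) * ((1+β) * (∑ j, Phat i j)) ≤ (1+α) * ((1+β) * 1) := by
        by_cases hik : (i:ℕ) ≤ k
        · have f1 := F_le N k α β P 0 i hik
          have f2 := F_le N k α β P kp i hik
          have s1 := hSle 0 i hik
          have s2 := hSle kp i hik
          have e' : (1+α) * ((1+β) * (∑ j, Phat i j))
              = (1+β)*((1+α) * ∑ z ∈ Finset.Iic i, P 0 z)
                + α*((1+α) * ∑ z ∈ Finset.Iic i, P kp z) := by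
            linear_combination h + (1+β) * f1 + α * f2
          have hδ'' : (1+α) * (δ * (1+α+β)) = (1+α) * (1+β) := by rw [hδ']
          nlinarith [e', hδ'',
            mul_nonneg (mul_nonneg hα1.le hβ1.le) (sub_nonneg.mpr s1),
            mul_nonneg (mul_nonneg hα hα1.le) (sub_nonneg.mpr s2)]
        · have hik' : k < (i:ℕ) := by omega
          have f1 := F_gt N k α β P 0 i hik'
          have f2 := F_gt N k α β P kp i hik'
          have t1 := hTle 0 i
          have t2 := hTle kp i
          have e' : (1+α) * ((1+β) * (∑ j, Phat i j))
              = (1+β)*(δ + (1+β) *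
                  ∑ z ∈ Finset.univ.filter (fun z : Fin (N+1) => k < (z:ℕ) ∧ z ≤ i), P 0 z)
                + α*(δ + (1+β) *
                  ∑ z ∈ Finset.univ.filter (fun z : Fin (N+1) => k < (z:ℕ) ∧ z ≤ i), P kp z) := by
            linear_combination h + (1+β) * f1 + α * f2 + (1+β) * (hcut 0) + α * (hcut kp)
          have idd : (1+β)*δ + (1+β)*((1+β)*(1-δ)) + α*δ + α*((1+β)*(1-δ))
              = (1+α)*(1+β) := by linear_combination (-β) * hδ'
          nlinarith [e', idd,
            mul_nonneg (mul_nonneg hβ1.le hβ1.le) (sub_nonneg.mpr t1),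
            mul_nonneg (mul_nonneg hα hβ1.le) (sub_nonneg.mpr t2)]
      have k1 : (1+β) * (∑ j, Phat i j) ≤ (1+β) * 1 := le_of_mul_le_mul_left key hα1
      have k2 : (∑ j, Phat i j) ≤ 1 := le_of_mul_le_mul_left k1 hβ1
      exact k2
  refine ⟨hIff, fun hsub => ?_⟩
  have hδeq := hIff.mp hsub
  have hδ' : δ * (1+α+β) = 1+β := by rw [hδeq]; field_simp
  constructor
  · have h1 : (1+β) * (∑ j, Phat kf j) = (1+β) * 1 := by
      apply mul_left_cancel₀ (ne_of_gt hα1)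
      rw [hRowKf]
      linear_combination (1+α) * hδ'
    have h2 := mul_left_cancel₀ (ne_of_gt hβ1) h1
    simpa using h2
  · have h1 : (1+β) * (∑ j, Phat (Fin.last N) j) = (1+β) * 1 := by
      apply mul_left_cancel₀ (ne_of_gt hα1)
      rw [hRowLast]
      linear_combination (-β) * hδ'
    have h2 := mul_left_cancel₀ (ne_of_gt hβ1) h1
    simpa using h2
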